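/- Define f_n(t) = (1 − t)^n · Σ_{j=0}^{n−1} t^j · C(n+j−1, j). Let t ∈ ℂ satisfy |t(1−t)| < 1/4. If Re(t) < 1/2 then f_n(t) → 1 as n → ∞, and if Re(t) > 1/2 then f_n(t) → 0 as n → ∞. (Note that |t(1−t)| < 1/4 excludes Re(t) = 1/2 except for no points at all: if Re(t) = 1/2 then |t(1−t)| ≥ 1/4.) -/

import Mathlib

open Filter

/-- `f_n(t) = (1-t)^n ∑_{j=0}^{n-1} t^j C(n+j-1,j)`, the ensemble average polynomial
after the substitution `t = z/β`. -/
noncomputable def fEns (n : ℕ) (t : ℂ) : ℂ :=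
  (1 - t) ^ n * ∑ j ∈ Finset.range n, t ^ j * (Nat.choose (n + j - 1) j : ℂ)

/-- binomial bound `C(m,k) ≤ 2^m`. -/
lemma choose_le_two_pow_aux (m k : ℕ) : m.choose k ≤ 2 ^ m := by
  rcases le_or_gt k m with h | h
  · calc m.choose k ≤ ∑ i ∈ Finset.range (m + 1), m.choose i :=
        Finset.single_le_sum (f := fun i => m.choose i) (fun _ _ => Nat.zero_le _)
          (Finset.mem_range.2 (Nat.lt_succ_of_le h))
    _ = 2 ^ m := Nat.sum_range_choose m
  · rw [Nat.choose_eq_zero_of_lt h]; positivity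

/-- Key algebraic identity used in the recurrence for `fEns`. -/
lemma fEns_key (m : ℕ) (t : ℂ) :
    (1 - t) * ∑ j ∈ Finset.range (m + 2), t ^ j * ((m + 1 + j).choose j : ℂ)
      = (∑ j ∈ Finset.range (m + 1), t ^ j * ((m + j).choose j : ℂ))
        + ((2 * m + 1).choose (m + 1) : ℂ) * t ^ (m + 1) * (1 - 2 * t) := by
  have h1 : ∑ j ∈ Finset.range (m + 2), t ^ j * ((m + 1 + j).choose j : ℂ)
      = (∑ j ∈ Finset.range (m + 1), t ^ (j + 1) * ((m + 1 + (j + 1)).choose (j + 1) : ℂ)) + 1 := by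
    rw [Finset.sum_range_succ' (fun j => t ^ j * ((m + 1 + j).choose j : ℂ)) (m + 1)]
    simp
  have h2 : t * ∑ j ∈ Finset.range (m + 2), t ^ j * ((m + 1 + j).choose j : ℂ)
      = (∑ j ∈ Finset.range (m + 1), t ^ (j + 1) * ((m + 1 + j).choose j : ℂ))
        + t ^ (m + 2) * ((2 * m + 2).choose (m + 1) : ℂ) := by
    rw [Finset.mul_sum]
    have : ∀ j, t * (t ^ j * ((m + 1 + j).choose j : ℂ))
        = t ^ (j + 1) * ((m + 1 + j).choose j : ℂ) := by intro j; ring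
    simp_rw [this]
    rw [Finset.sum_range_succ]
    rw [show m + 1 + (m + 1) = 2 * m + 2 from by omega]
  have pascal : ∀ j, ((m + 1 + (j + 1)).choose (j + 1) : ℂ)
      = ((m + 1 + j).choose j : ℂ) + ((m + 1 + j).choose (j + 1) : ℂ) := by
    intro j
    have h : (m + 1 + (j + 1)).choose (j + 1) = (m + 1 + j).choose j + (m + 1 + j).choose (j + 1) := by
      rw [show m + 1 + (j + 1) = (m + 1 + j) + 1 from rfl]
      exact Nat.choose_succ_succ _ _
    exact_mod_cast h
  have h3 : ∑ j ∈ Finset.range (m + 1), t ^ j * ((m + j).choose j : ℂ)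
      = (∑ j ∈ Finset.range m, t ^ (j + 1) * ((m + (j + 1)).choose (j + 1) : ℂ)) + 1 := by
    rw [Finset.sum_range_succ' (fun j => t ^ j * ((m + j).choose j : ℂ)) m]
    simp
  have hdouble : ((2 * m + 2).choose (m + 1) : ℂ) = 2 * ((2 * m + 1).choose (m + 1) : ℂ) := by
    have h : (2 * m + 2).choose (m + 1) = 2 * (2 * m + 1).choose (m + 1) := by
      have hp : (2 * m + 2).choose (m + 1) = (2 * m + 1).choose m + (2 * m + 1).choose (m + 1) :=
        Nat.choose_succ_succ (2 * m + 1) m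
      have hs : (2 * m + 1).choose m = (2 * m + 1).choose (m + 1) := by
        rw [← Nat.choose_symm (by omega : m ≤ 2 * m + 1)]
        congr 1; omega
      omega
    exact_mod_cast congrArg (Nat.cast : ℕ → ℂ) h
  have expand : (1 - t) * ∑ j ∈ Finset.range (m + 2), t ^ j * ((m + 1 + j).choose j : ℂ)
      = (∑ j ∈ Finset.range (m + 2), t ^ j * ((m + 1 + j).choose j : ℂ))
        - t * ∑ j ∈ Finset.range (m + 2), t ^ j * ((m + 1 + j).choose j : ℂ) := by ring
  rw [expand, h2, h1]
  -- now combine sums over range (m+1)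
  have h4 : (∑ j ∈ Finset.range (m + 1), t ^ (j + 1) * ((m + 1 + (j + 1)).choose (j + 1) : ℂ))
      - ∑ j ∈ Finset.range (m + 1), t ^ (j + 1) * ((m + 1 + j).choose j : ℂ)
      = ∑ j ∈ Finset.range (m + 1), t ^ (j + 1) * ((m + 1 + j).choose (j + 1) : ℂ) := by
    rw [← Finset.sum_sub_distrib]
    refine Finset.sum_congr rfl fun j _ => ?_
    rw [pascal j]; ring
  have h5 : ∑ j ∈ Finset.range (m + 1), t ^ (j + 1) * ((m + 1 + j).choose (j + 1) : ℂ)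
      = (∑ j ∈ Finset.range m, t ^ (j + 1) * ((m + (j + 1)).choose (j + 1) : ℂ))
        + t ^ (m + 1) * ((2 * m + 1).choose (m + 1) : ℂ) := by
    rw [Finset.sum_range_succ]
    congr 1
    · refine Finset.sum_congr rfl fun j _ => ?_
      congr 3
      omega
    · rw [show m + 1 + m = 2 * m + 1 from by omega]
  have goal : (∑ j ∈ Finset.range (m + 1), t ^ (j + 1) * ((m + 1 + (j + 1)).choose (j + 1) : ℂ)) + 1
      - ((∑ j ∈ Finset.range (m + 1), t ^ (j + 1) * ((m + 1 + j).choose j : ℂ))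
          + t ^ (m + 2) * ((2 * m + 2).choose (m + 1) : ℂ))
      = ((∑ j ∈ Finset.range m, t ^ (j + 1) * ((m + (j + 1)).choose (j + 1) : ℂ)) + 1)
        + ((2 * m + 1).choose (m + 1) : ℂ) * t ^ (m + 1) * (1 - 2 * t) := by
    have e : (∑ j ∈ Finset.range (m + 1), t ^ (j + 1) * ((m + 1 + (j + 1)).choose (j + 1) : ℂ))
        - ∑ j ∈ Finset.range (m + 1), t ^ (j + 1) * ((m + 1 + j).choose j : ℂ)
        = (∑ j ∈ Finset.range m, t ^ (j + 1) * ((m + (j + 1)).choose (j + 1) : ℂ))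
          + t ^ (m + 1) * ((2 * m + 1).choose (m + 1) : ℂ) := by rw [h4, h5]
    rw [hdouble]
    linear_combination e
  rw [← h3] at goal
  linear_combination goal

/-- Recurrence: `f_{n+1}(t) = f_n(t) + C(2n-1,n) (t(1-t))^n (1-2t)` for `n = m+1 ≥ 1`. -/
lemma fEns_succ (m : ℕ) (t : ℂ) :
    fEns (m + 2) t = fEns (m + 1) t
      + ((2 * m + 1).choose (m + 1) : ℂ) * (t * (1 - t)) ^ (m + 1) * (1 - 2 * t) := by
  unfold fEns
  have e1 : ∀ j, (m + 2 + j - 1).choose j = (m + 1 + j).choose j := fun j => by congr 1; omega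
  have e2 : ∀ j, (m + 1 + j - 1).choose j = (m + j).choose j := fun j => by congr 1; omega
  simp_rw [e1, e2]
  have := fEns_key m t
  calc (1 - t) ^ (m + 2) * ∑ j ∈ Finset.range (m + 2), t ^ j * ((m + 1 + j).choose j : ℂ)
      = (1 - t) ^ (m + 1) * ((1 - t) * ∑ j ∈ Finset.range (m + 2), t ^ j * ((m + 1 + j).choose j : ℂ)) := by
        ring
    _ = (1 - t) ^ (m + 1) * ((∑ j ∈ Finset.range (m + 1), t ^ j * ((m + j).choose j : ℂ))
          + ((2 * m + 1).choose (m + 1) : ℂ) * t ^ (m + 1) * (1 - 2 * t)) := by rw [this]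
    _ = (1 - t) ^ (m + 1) * (∑ j ∈ Finset.range (m + 1), t ^ j * ((m + j).choose j : ℂ))
          + ((2 * m + 1).choose (m + 1) : ℂ) * (t * (1 - t)) ^ (m + 1) * (1 - 2 * t) := by
        rw [mul_pow]; ring

/-- Symmetry: `f_n(t) + f_n(1-t) = 1` for `n ≥ 1`. -/
lemma fEns_symm (n : ℕ) (hn : 1 ≤ n) (t : ℂ) : fEns n t + fEns n (1 - t) = 1 := by
  obtain ⟨m, rfl⟩ : ∃ m, n = m + 1 := ⟨n - 1, by omega⟩
  clear hn
  induction m with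
  | zero =>
      unfold fEns
      norm_num [Finset.sum_range_one]
  | succ k ih =>
      rw [fEns_succ k t, fEns_succ k (1 - t)]
      have h1 : (1 : ℂ) - (1 - t) = t := by ring
      rw [h1]
      linear_combination ih

/-- Norm bound: `‖f_{n+1}(t)‖ ≤ (n+1) * b * (4ab)^n` where `a = |t|`, `b = |1-t|`,
assuming `1/2 ≤ a`. -/
lemma fEns_norm_bound (t : ℂ) (ha : 1 / 2 ≤ ‖t‖) (n : ℕ) :
    ‖fEns (n + 1) t‖ ≤ (n + 1 : ℝ) * ‖1 - t‖
      * (4 * ‖t‖ * ‖1 - t‖) ^ n := by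
  set a := ‖t‖ with ha_def
  set b := ‖1 - t‖ with hb_def
  have ha0 : (0 : ℝ) ≤ a := norm_nonneg t
  have hb0 : (0 : ℝ) ≤ b := norm_nonneg _
  have h2a : (1 : ℝ) ≤ 2 * a := by linarith
  have hterm : ∀ j ∈ Finset.range (n + 1),
      ‖t ^ j * ((n + 1 + j - 1).choose j : ℂ)‖ ≤ 2 ^ n * (2 * a) ^ n := by
    intro j hj
    have hj' : j ≤ n := by simpa [Nat.lt_succ_iff] using hj
    have hc : ((n + 1 + j - 1).choose j : ℝ) ≤ 2 ^ (n + j) := by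
      have h := choose_le_two_pow_aux (n + j) j
      have he : n + 1 + j - 1 = n + j := by omega
      rw [he]
      exact_mod_cast h
    have hnorm : ‖t ^ j * ((n + 1 + j - 1).choose j : ℂ)‖
        = a ^ j * ((n + 1 + j - 1).choose j : ℝ) := by
      rw [norm_mul, norm_pow, Complex.norm_natCast]
    rw [hnorm]
    calc a ^ j * ((n + 1 + j - 1).choose j : ℝ) ≤ a ^ j * 2 ^ (n + j) := by
          apply mul_le_mul_of_nonneg_left hc (pow_nonneg ha0 j)
      _ = 2 ^ n * (2 * a) ^ j := by rw [pow_add, mul_pow]; ring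
      _ ≤ 2 ^ n * (2 * a) ^ n := by
          apply mul_le_mul_of_nonneg_left _ (by positivity)
          exact pow_le_pow_right₀ h2a hj'
  have hsum : ‖∑ j ∈ Finset.range (n + 1), t ^ j * ((n + 1 + j - 1).choose j : ℂ)‖
      ≤ (n + 1 : ℝ) * (2 ^ n * (2 * a) ^ n) := by
    calc ‖∑ j ∈ Finset.range (n + 1), t ^ j * ((n + 1 + j - 1).choose j : ℂ)‖
        ≤ ∑ j ∈ Finset.range (n + 1), ‖t ^ j * ((n + 1 + j - 1).choose j : ℂ)‖ :=
          norm_sum_le _ _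
      _ ≤ ∑ _j ∈ Finset.range (n + 1), 2 ^ n * (2 * a) ^ n := Finset.sum_le_sum hterm
      _ = (n + 1 : ℝ) * (2 ^ n * (2 * a) ^ n) := by
          rw [Finset.sum_const, Finset.card_range]; ring
  have hfe : ‖fEns (n + 1) t‖ = b ^ (n + 1)
      * ‖∑ j ∈ Finset.range (n + 1), t ^ j * ((n + 1 + j - 1).choose j : ℂ)‖ := by
    unfold fEns
    rw [norm_mul, norm_pow]
  rw [hfe]
  calc b ^ (n + 1) * ‖∑ j ∈ Finset.range (n + 1), t ^ j * ((n + 1 + j - 1).choose j : ℂ)‖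
      ≤ b ^ (n + 1) * ((n + 1 : ℝ) * (2 ^ n * (2 * a) ^ n)) :=
        mul_le_mul_of_nonneg_left hsum (pow_nonneg hb0 _)
    _ = (n + 1 : ℝ) * b * (4 * a * b) ^ n := by
        have h4 : (4 * a * b : ℝ) ^ n = 2 ^ n * (2 * a) ^ n * b ^ n := by
          rw [mul_pow, mul_pow, mul_pow, show (4:ℝ) = 2 * 2 from by norm_num, mul_pow]
          ring
        rw [h4, pow_succ]
        ring

/-- Decay: if `|t(1-t)| < 1/4` and `Re t > 1/2` then `f_n(t) → 0`. -/
lemma fEns_tendsto_zero (t : ℂ) (ht : ‖t * (1 - t)‖ < 1 / 4)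
    (hre : 1 / 2 < t.re) : Tendsto (fun n : ℕ => fEns n t) atTop (nhds 0) := by
  have ha : 1 / 2 ≤ ‖t‖ := le_of_lt (lt_of_lt_of_le hre (Complex.re_le_norm t))
  set a := ‖t‖
  set b := ‖1 - t‖
  set r : ℝ := 4 * a * b with hr_def
  have hr0 : 0 ≤ r := by positivity
  have hr1 : r < 1 := by
    have : a * b < 1 / 4 := by
      have := ht
      rwa [norm_mul] at this
    rw [hr_def]; linarith
  rw [← tendsto_add_atTop_iff_nat 1]
  apply squeeze_zero_norm (fun n => fEns_norm_bound t ha n)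
  have h1 : Tendsto (fun n : ℕ => (n : ℝ) * r ^ n) atTop (nhds 0) := by
    have hs : Summable (fun n : ℕ => (n : ℝ) ^ 1 * r ^ n) :=
      summable_pow_mul_geometric_of_norm_lt_one 1 (by rwa [Real.norm_eq_abs, abs_of_nonneg hr0])
    simpa using hs.tendsto_atTop_zero
  have h2 : Tendsto (fun n : ℕ => r ^ n) atTop (nhds 0) :=
    tendsto_pow_atTop_nhds_zero_of_lt_one hr0 hr1
  have h3 : Tendsto (fun n : ℕ => ((n : ℝ) * r ^ n + r ^ n) * b) atTop (nhds 0) := by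
    have := (h1.add h2).mul_const b
    simpa using this
  refine h3.congr fun n => ?_
  ring

/-- In the convergence region `|t(1-t)| < 1/4`, `f_n(t) → 1` when `Re t < 1/2` and
`f_n(t) → 0` when `Re t > 1/2`. -/
theorem fEns_pointwise_limit (t : ℂ) (ht : ‖t * (1 - t)‖ < 1 / 4) :
    (t.re < 1 / 2 → Tendsto (fun n : ℕ => fEns n t) atTop (nhds 1)) ∧
    (1 / 2 < t.re → Tendsto (fun n : ℕ => fEns n t) atTop (nhds 0)) := by
  constructor
  · intro hre
    have hre' : 1 / 2 < (1 - t).re := by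
      simp only [Complex.sub_re, Complex.one_re]
      linarith
    have ht' : ‖(1 - t) * (1 - (1 - t))‖ < 1 / 4 := by
      have h1 : (1 : ℂ) - (1 - t) = t := by ring
      rw [h1, mul_comm]
      exact ht
    have h0 := fEns_tendsto_zero (1 - t) ht' hre'
    have h1 : Tendsto (fun n : ℕ => 1 - fEns n (1 - t)) atTop (nhds 1) := by
      have := (tendsto_const_nhds (x := (1 : ℂ)) (f := atTop)).sub h0
      simpa using this
    refine h1.congr' ?_
    filter_upwards [eventually_ge_atTop 1] with n hn
    have := fEns_symm n hn t
    linear_combination -this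
  · exact fEns_tendsto_zero t ht
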